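/- In ZF: let T₁ be the theory of dense linear orders without endpoints with constants c_n satisfying c_n < c_{n+1}, and p(x) = {c_n < x : n < ω}. If T₁ has a model with universe X omitting p(x), then T₁ has a model with universe X in which p(x) is realized but has no least realization. -/

import Mathlib

open FirstOrder Language

/-- The vocabulary of the Ehrenfeucht example: the order symbol together with
constants `c_n` for `n < ω`. -/
abbrev EL : FirstOrder.Language := Language.order[[ℕ]]

instance : IsOrdered EL := ⟨Sum.inl leSymb⟩

/-- The constant `c_n`, as a closed term. -/
def cT (n : ℕ) : EL.Term (Empty ⊕ Fin 0) := Constants.term (Language.order.con n)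

/-- The Ehrenfeucht theory `T₁`: dense linear order without endpoints together with the
axioms `c_n < c_{n+1}` for all `n < ω`. -/
def T1 : EL.Theory :=
  (LHom.sumInl.onTheory Language.order.dlo) ∪
    Set.range (fun n : ℕ => (Term.lt (cT n) (cT (n + 1)) : EL.Sentence))

section
variable {X : Type*}

/-- The interpretation of `≤` in a structure `S` on `X`. -/
def Ele (S : EL.Structure X) (a b : X) : Prop :=
  @Structure.RelMap EL X S 2 (Sum.inl leSymb) ![a, b]

/-- The interpretation of `<` in a structure `S` on `X`. -/
def Elt (S : EL.Structure X) (a b : X) : Prop := Ele S a b ∧ a ≠ b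

/-- The interpretation of the constant `c_n` in a structure `S` on `X`. -/
def Econ (S : EL.Structure X) (n : ℕ) : X :=
  @Structure.funMap EL X S 0 (Language.order.con n) ![]

/-- `a` realizes the type `p(x) = {c_n < x : n < ω}` in the structure `S`. -/
def RealizesP (S : EL.Structure X) (a : X) : Prop := ∀ n : ℕ, Elt S (Econ S n) a

end

section Aux
variable {X : Type*}

theorem buildModel (li : LinearOrder X) (hd : DenselyOrdered X) (ht : NoTopOrder X)
    (hb : NoBotOrder X) (c : ℕ → X) (hc : ∀ n, c n < c (n + 1)) :
    ∃ S : EL.Structure X, @Theory.Model EL X S T1 ∧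
      (∀ a b : X, Ele S a b ↔ a ≤ b) ∧ (∀ n, Econ S n = c n) := by
  letI : Language.order.Structure X := orderStructure X
  letI : (constantsOn ℕ).Structure X := constantsOn.structure c
  letI S : EL.Structure X := Language.sumStructure _ _ X
  haveI : Language.order.OrderedStructure X := ⟨fun x => Iff.rfl⟩
  haveI : EL.OrderedStructure X := ⟨fun x => Iff.rfl⟩
  refine ⟨S, ?_, fun a b => Iff.rfl, fun n => rfl⟩
  rw [T1]; refine Theory.model_union_iff.mpr ?_
  constructor
  · refine (@LHom.onTheory_model _ _ X _ _ _ (LHom.sumInl_isExpansionOn X) _).mpr ?_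
    infer_instance
  · rw [Theory.model_iff]
    rintro φ ⟨n, rfl⟩
    show ((cT n).lt (cT (n + 1))).Realize (default : Empty → X) (default : Fin 0 → X)
    rw [Term.realize_lt]
    simp only [cT, Term.realize_constants]
    exact hc n

theorem construct (li : LinearOrder X) (hd : DenselyOrdered X) (ht : NoTopOrder X)
    (hb : NoBotOrder X) (c : ℕ → X) (hc : ∀ n, c n < c (n + 1))
    (hcof : ∀ x : X, ∃ n, x ≤ c n) :
    ∃ S : EL.Structure X, @Theory.Model EL X S T1 ∧
      (∃ a : X, RealizesP S a) ∧
      ¬ ∃ a : X, RealizesP S a ∧ ∀ b : X, RealizesP S b → Ele S a b := by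
  classical
  have cmono : StrictMono c := strictMono_nat_of_lt_succ hc
  set B : X → Prop := fun x => ∃ n, c (2*n+1) ≤ x ∧ x < c (2*n+2) with hBdef
  -- uniqueness of block index
  have huniq : ∀ {m n : ℕ} {x : X}, c (2*m+1) ≤ x → x < c (2*m+2) →
      c (2*n+1) ≤ x → x < c (2*n+2) → m = n := by
    intro m n x h1 h2 h3 h4
    by_contra hne
    rcases Nat.lt_or_ge m n with h | h
    · have : c (2*m+2) ≤ c (2*n+1) := cmono.monotone (by omega)
      exact absurd (lt_of_lt_of_le h2 (le_trans this h3)) (lt_irrefl x)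
    · have hmn : n < m := lt_of_le_of_ne h (Ne.symm hne)
      have : c (2*n+2) ≤ c (2*m+1) := cmono.monotone (by omega)
      exact absurd (lt_of_lt_of_le h4 (le_trans this h1)) (lt_irrefl x)
  let tag : X → WithBot ℕᵒᵈ := fun x =>
    if h : B x then ((OrderDual.toDual (Nat.find h) : ℕᵒᵈ) : WithBot ℕᵒᵈ) else ⊥
  have tagB : ∀ {x : X} {n : ℕ}, c (2*n+1) ≤ x → x < c (2*n+2) →
      tag x = ((OrderDual.toDual n : ℕᵒᵈ) : WithBot ℕᵒᵈ) := by
    intro x n h1 h2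
    have hx : B x := ⟨n, h1, h2⟩
    have := Nat.find_spec hx
    simp only [tag, dif_pos hx]
    exact congrArg _ (congrArg _ (huniq this.1 this.2 h1 h2))
  have tagA : ∀ {x : X}, ¬ B x → tag x = ⊥ := fun hx => dif_neg hx
  -- the new order
  let key : X → Lex (WithBot ℕᵒᵈ × X) := fun x => toLex (tag x, x)
  have keyinj : Function.Injective key := fun a b hab => congrArg (fun p => (ofLex p).2) hab
  let L' : PLift (LinearOrder X) := ⟨LinearOrder.lift' key keyinj⟩
  have hle' : ∀ a b : X, L'.down.le a b ↔ key a ≤ key b := fun _ _ => Iff.rfl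
  have hlt' : ∀ a b : X, L'.down.lt a b ↔ key a < key b := fun _ _ => Iff.rfl
  have hltc : ∀ a b : X, L'.down.lt a b ↔ (tag a < tag b ∨ (tag a = tag b ∧ a < b)) := by
    intro a b
    rw [hlt']
    simpa using Prod.Lex.lt_iff (x := toLex (tag a, a)) (y := toLex (tag b, b))
  -- block membership facts
  have hmemOdd : ∀ n, c (2*n+1) ≤ c (2*n+3) ∧ c (2*n+3) < c (2*n+4) :=
    fun n => ⟨cmono.monotone (by omega), cmono (by omega)⟩
  have hBodd : ∀ n, B (c (2*n+1)) := fun n => ⟨n, le_rfl, cmono (by omega)⟩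
  have htagOdd : ∀ n, tag (c (2*n+1)) = ((OrderDual.toDual n : ℕᵒᵈ) : WithBot ℕᵒᵈ) :=
    fun n => tagB le_rfl (cmono (by omega))
  have htagOdd3 : ∀ n, tag (c (2*n+3)) = ((OrderDual.toDual (n+1) : ℕᵒᵈ) : WithBot ℕᵒᵈ) := by
    intro n
    have : 2*(n+1)+1 = 2*n+3 := by omega
    have h := htagOdd (n+1)
    rwa [this] at h
  have hBeven : ∀ n, ¬ B (c (2*n)) := by
    rintro n ⟨m, h1, h2⟩
    have h1' : 2*m+1 ≤ 2*n := cmono.le_iff_le.mp h1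
    have h2' : 2*n < 2*m+2 := cmono.lt_iff_lt.mp h2
    omega
  -- dual order facts
  have hdual : ∀ m n : ℕ, ((OrderDual.toDual m : ℕᵒᵈ) : WithBot ℕᵒᵈ) <
      ((OrderDual.toDual n : ℕᵒᵈ) : WithBot ℕᵒᵈ) ↔ n < m := by
    intro m n
    rw [WithBot.coe_lt_coe]
    exact OrderDual.toDual_lt_toDual.trans Iff.rfl
  -- new constants are the even-indexed old constants
  have hc' : ∀ n, L'.down.lt (c (2*n)) (c (2*(n+1))) := by
    intro n
    refine (hltc _ _).mpr (Or.inr ⟨?_, cmono (by omega)⟩)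
    rw [tagA (hBeven n), tagA (hBeven (n+1))]
  -- density of the complement of B below any odd constant
  have Adense : ∀ N : ℕ, ∀ x y : X, x < y → y ≤ c (2*N+1) → ¬ B x →
      ∃ z, x < z ∧ z < y ∧ ¬ B z := by
    intro N
    induction N using Nat.strong_induction_on with
    | _ N ih =>
      intro x y hxy hyN hx
      obtain ⟨z0, hz1, hz2⟩ := exists_between hxy
      by_cases hz : B z0
      · obtain ⟨m, hm1, hm2⟩ := hz
        have hmN : m < N := by
          have h5 : c (2*m+1) < c (2*N+1) := lt_of_le_of_lt hm1 (lt_of_lt_of_le hz2 hyN)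
          have := cmono.lt_iff_lt.mp h5
          omega
        have hxm : x < c (2*m+1) := by
          by_contra hge
          push_neg at hge
          exact hx ⟨m, hge, lt_trans hz1 hm2⟩
        obtain ⟨z, hz1', hz2', hz3'⟩ := ih m hmN x (c (2*m+1)) hxm le_rfl hx
        exact ⟨z, hz1', lt_trans (lt_of_lt_of_le hz2' hm1) hz2, hz3'⟩
      · exact ⟨z0, hz1, hz2, hz⟩
  -- density of the new order
  have hd' : @DenselyOrdered X L'.down.toPartialOrder.toPreorder.toLT := by
    refine @DenselyOrdered.mk X L'.down.toPartialOrder.toPreorder.toLT (fun a b hab => ?_)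
    have hab' := (hltc a b).mp hab
    by_cases hBa : B a
    · obtain ⟨m, am1, am2⟩ := hBa
      by_cases hBb : B b
      · obtain ⟨n, bn1, bn2⟩ := hBb
        rcases hab' with htag | ⟨htag, hltab⟩
        · rw [tagB am1 am2, tagB bn1 bn2] at htag
          have hnm : n < m := (hdual m n).mp htag
          rcases Nat.lt_or_ge (n+1) m with hm | hm
          · refine ⟨c (2*n+3), (hltc _ _).mpr (Or.inl ?_), (hltc _ _).mpr (Or.inl ?_)⟩
            · rw [tagB am1 am2, htagOdd3 n]
              exact (hdual m (n+1)).mpr hm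
            · rw [htagOdd3 n, tagB bn1 bn2]
              exact (hdual (n+1) n).mpr (by omega)
          · obtain ⟨z, hz1, hz2⟩ := exists_between am2
            have hBz : c (2*m+1) ≤ z := le_of_lt (lt_of_le_of_lt am1 hz1)
            refine ⟨z, (hltc _ _).mpr (Or.inr ⟨?_, hz1⟩), (hltc _ _).mpr (Or.inl ?_)⟩
            · rw [tagB am1 am2, tagB hBz hz2]
            · rw [tagB hBz hz2, tagB bn1 bn2]
              exact (hdual m n).mpr hnm
        · rw [tagB am1 am2, tagB bn1 bn2] at htag
          have hmn : m = n := OrderDual.toDual_inj.mp (WithBot.coe_inj.mp htag)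
          subst hmn
          obtain ⟨z, hz1, hz2⟩ := exists_between hltab
          have h1 : c (2*m+1) ≤ z := le_trans am1 (le_of_lt hz1)
          have h2 : z < c (2*m+2) := lt_trans hz2 bn2
          exact ⟨z, (hltc _ _).mpr (Or.inr ⟨by rw [tagB am1 am2, tagB h1 h2], hz1⟩),
            (hltc _ _).mpr (Or.inr ⟨by rw [tagB h1 h2, tagB bn1 bn2], hz2⟩)⟩
      · exfalso
        rcases hab' with htag | ⟨htag, _⟩
        · rw [tagA hBb] at htag
          exact not_lt_bot htag
        · rw [tagB am1 am2, tagA hBb] at htag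
          exact absurd htag (by simp)
    · by_cases hBb : B b
      · obtain ⟨n, bn1, bn2⟩ := hBb
        refine ⟨c (2*n+3), (hltc _ _).mpr (Or.inl ?_), (hltc _ _).mpr (Or.inl ?_)⟩
        · rw [tagA hBa, htagOdd3 n]
          exact WithBot.bot_lt_coe _
        · rw [htagOdd3 n, tagB bn1 bn2]
          exact (hdual (n+1) n).mpr (by omega)
      · rcases hab' with htag | ⟨_, hltab⟩
        · rw [tagA hBa, tagA hBb] at htag
          exact absurd htag (lt_irrefl _)
        · obtain ⟨k, hk⟩ := hcof b
          have hkk : b ≤ c (2*k+1) := le_trans hk (cmono.monotone (by omega))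
          obtain ⟨z, hz1, hz2, hz3⟩ := Adense k a b hltab hkk hBa
          exact ⟨z, (hltc _ _).mpr (Or.inr ⟨by rw [tagA hBa, tagA hz3], hz1⟩),
            (hltc _ _).mpr (Or.inr ⟨by rw [tagA hz3, tagA hBb], hz2⟩)⟩
  -- no top
  have ht' : @NoTopOrder X L'.down.toPartialOrder.toPreorder.toLE := by
    refine @NoTopOrder.mk X L'.down.toPartialOrder.toPreorder.toLE (fun x => ?_)
    by_cases hBx : B x
    · obtain ⟨n, h1, h2⟩ := hBx
      obtain ⟨z, hz1, hz2⟩ := exists_between h2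
      refine ⟨z, fun hle => ?_⟩
      have hkey : key x < key z := (hlt' _ _).mp ((hltc _ _).mpr (Or.inr
        ⟨by rw [tagB h1 h2, tagB (le_of_lt (lt_of_le_of_lt h1 hz1)) hz2], hz1⟩))
      exact absurd ((hle' _ _).mp hle) (not_le_of_gt hkey)
    · refine ⟨c 1, fun hle => ?_⟩
      have htag1 : tag (c 1) = ((OrderDual.toDual 0 : ℕᵒᵈ) : WithBot ℕᵒᵈ) := by
        have := htagOdd 0
        norm_num at this
        exact this
      have hkey : key x < key (c 1) := (hlt' _ _).mp ((hltc _ _).mpr (Or.inl (by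
        rw [tagA hBx, htag1]
        exact WithBot.bot_lt_coe _)))
      exact absurd ((hle' _ _).mp hle) (not_le_of_gt hkey)
  -- no bot
  have hb' : @NoBotOrder X L'.down.toPartialOrder.toPreorder.toLE := by
    refine @NoBotOrder.mk X L'.down.toPartialOrder.toPreorder.toLE (fun x => ?_)
    by_cases hBx : B x
    · obtain ⟨n, h1, h2⟩ := hBx
      refine ⟨c (2*n+3), fun hle => ?_⟩
      have hkey : key (c (2*n+3)) < key x := (hlt' _ _).mp ((hltc _ _).mpr (Or.inl (by
        rw [htagOdd3 n, tagB h1 h2]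
        exact (hdual (n+1) n).mpr (by omega))))
      exact absurd ((hle' _ _).mp hle) (not_le_of_gt hkey)
    · obtain ⟨w, hw⟩ := NoBotOrder.exists_not_ge (min x (c 1))
      have hwlt : w < min x (c 1) := not_le.mp hw
      have hwx : w < x := lt_of_lt_of_le hwlt (min_le_left _ _)
      have hwc : w < c 1 := lt_of_lt_of_le hwlt (min_le_right _ _)
      have hBw : ¬ B w := by
        rintro ⟨m, hm1, hm2⟩
        have : (2*m+1 : ℕ) < 1 := cmono.lt_iff_lt.mp (lt_of_le_of_lt hm1 hwc)
        omega
      refine ⟨w, fun hle => ?_⟩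
      have hkey : key w < key x := (hlt' _ _).mp ((hltc _ _).mpr (Or.inr
        ⟨by rw [tagA hBw, tagA hBx], hwx⟩))
      exact absurd ((hle' _ _).mp hle) (not_le_of_gt hkey)
  -- build the model
  obtain ⟨S, hS, hEle, hEcon⟩ := buildModel L'.down hd' ht' hb' (fun n => c (2*n))
    (fun n => hc' n)
  -- realizers of p are exactly the elements of B
  have hreal : ∀ a : X, RealizesP S a ↔ B a := by
    intro a
    constructor
    · intro ha
      by_contra hBa
      obtain ⟨k, hk⟩ := hcof a
      have h1 := ha k
      rw [Elt, hEcon k] at h1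
      have hkey : key (c (2*k)) < key a :=
        lt_of_le_of_ne ((hle' _ _).mp ((hEle _ _).mp h1.1)) (fun he => h1.2 (keyinj he))
      rcases (hltc _ _).mp ((hlt' _ _).mpr hkey) with htag | ⟨_, hlt2⟩
      · rw [tagA hBa] at htag
        exact not_lt_bot htag
      · have : a ≤ c (2*k) := le_trans hk (cmono.monotone (by omega))
        exact absurd (lt_of_lt_of_le hlt2 this) (lt_irrefl _)
    · rintro ⟨m, h1, h2⟩ n
      rw [Elt, hEcon n]
      have hkey : key (c (2*n)) < key a := (hlt' _ _).mp ((hltc _ _).mpr (Or.inl (by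
        rw [tagA (hBeven n), tagB h1 h2]
        exact WithBot.bot_lt_coe _)))
      exact ⟨(hEle _ _).mpr ((hle' _ _).mpr (le_of_lt hkey)),
        fun he => lt_irrefl _ (he ▸ hkey)⟩
  refine ⟨S, hS, ⟨c 1, (hreal _).mpr ?_⟩, ?_⟩
  · have := hBodd 0
    norm_num at this
    exact this
  · rintro ⟨a, ha, hleast⟩
    obtain ⟨n, h1, h2⟩ := (hreal a).mp ha
    have hBb : B (c (2*n+3)) := by
      have := hBodd (n+1)
      rwa [show 2*(n+1)+1 = 2*n+3 from by omega] at this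
    have hrb : RealizesP S (c (2*n+3)) := (hreal _).mpr hBb
    have hle := hleast _ hrb
    have hkey : key (c (2*n+3)) < key a := (hlt' _ _).mp ((hltc _ _).mpr (Or.inl (by
      rw [htagOdd3 n, tagB h1 h2]
      exact (hdual (n+1) n).mpr (by omega))))
    exact absurd ((hle' _ _).mp ((hEle _ _).mp hle)) (not_le_of_gt hkey)

end Aux

/-- (ZF) If `T₁` has a model with universe `X` omitting `p(x) = {c_n < x : n < ω}`, then
`T₁` has a model with universe `X` in which `p(x)` is realized but has no `<`-least
realization. -/
theorem exists_model_realizing_without_least (X : Type*)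
    (h : ∃ S : EL.Structure X, @Theory.Model EL X S T1 ∧ ∀ a : X, ¬ RealizesP S a) :
    ∃ S : EL.Structure X, @Theory.Model EL X S T1 ∧
      (∃ a : X, RealizesP S a) ∧
      ¬ ∃ a : X, RealizesP S a ∧ ∀ b : X, RealizesP S b → Ele S a b := by
  classical
  obtain ⟨S₀, hS₀, hO⟩ := h
  letI : (Language.order.sum (constantsOn ℕ)).Structure X := S₀
  letI : Language.order.Structure X :=
    (LHom.sumInl : Language.order →ᴸ Language.order.sum (constantsOn ℕ)).reduct X
  haveI hexp :
      (LHom.sumInl : Language.order →ᴸ Language.order.sum (constantsOn ℕ)).IsExpansionOn X :=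
    LHom.isExpansionOn_reduct _ _
  haveI hdlo : X ⊨ Language.order.dlo :=
    (@LHom.onTheory_model _ _ X _ _ _ hexp _).mp (Theory.model_union_iff.mp hS₀).1
  letI li : LinearOrder X := Language.order.linearOrderOfModels X
  haveI : Language.order.OrderedStructure X := ⟨fun x => by
    have hx : ![x 0, x 1] = x := by funext i; fin_cases i <;> rfl
    show _ ↔ Structure.RelMap (leSymb : Language.order.Relations 2) ![x 0, x 1]
    rw [hx]⟩
  haveI : EL.OrderedStructure X := ⟨fun x => by
    have hx : ![x 0, x 1] = x := by funext i; fin_cases i <;> rfl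
    show _ ↔ Structure.RelMap (leSymb : EL.Relations 2) ![x 0, x 1]
    rw [hx]⟩
  haveI hd : DenselyOrdered X := Language.order.denselyOrdered_of_dlo X
  haveI ht : NoTopOrder X := Language.order.noTopOrder_of_dlo X
  haveI hb : NoBotOrder X := Language.order.noBotOrder_of_dlo X
  set c : ℕ → X := Econ S₀ with hcdef
  have hlt : ∀ n, c n < c (n + 1) := by
    intro n
    have hmem : (Term.lt (cT n) (cT (n + 1)) : EL.Sentence) ∈
        Set.range (fun n : ℕ => (Term.lt (cT n) (cT (n + 1)) : EL.Sentence)) := ⟨n, rfl⟩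
    haveI h2 : X ⊨ Set.range (fun n : ℕ => (Term.lt (cT n) (cT (n + 1)) : EL.Sentence)) :=
      (Theory.model_union_iff.mp hS₀).2
    have hreal := Theory.realize_sentence_of_mem (M := X)
      (T := Set.range (fun n : ℕ => (Term.lt (cT n) (cT (n + 1)) : EL.Sentence)))
      (show _ from hmem)
    have h3 : ((cT n).lt (cT (n+1))).Realize (default : Empty → X) (default : Fin 0 → X) :=
      hreal
    rw [Term.realize_lt] at h3
    simp only [cT, Term.realize_constants] at h3
    have e : ∀ m, (Language.order.con m : X) = c m := by
      intro m
      show Structure.funMap _ _ = Structure.funMap _ _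
      exact congrArg _ (funext fun i => i.elim0)
    rwa [e n, e (n+1)] at h3
  have hcof : ∀ x : X, ∃ n, x ≤ c n := by
    intro x
    obtain ⟨n, hn⟩ := not_forall.mp (hO x)
    refine ⟨n, ?_⟩
    rcases le_total x (c n) with h | h
    · exact h
    · by_contra hx
      exact hn ⟨h, fun he => hx (le_of_eq he.symm)⟩
  exact construct li hd ht hb c hlt hcof
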